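/- Let S_1 and S_2 be S-rings over finite groups G_1 and G_2 respectively, with coefficients in a field F, and let φ : S_1 → S_2 be an F-algebra isomorphism. Then φ maps every basic quantity of S_1 to a basic quantity of S_2 if and only if φ respects the Hadamard product, i.e., φ(x ∘ y) = φ(x) ∘ φ(y) for all x, y ∈ S_1. -/

import Mathlib

open scoped Classical

noncomputable section

/-- The Hadamard (pointwise) product on the group algebra. -/
def had {F : Type*} [Field F] {G : Type*} [Group G] (x y : MonoidAlgebra F G) :
    MonoidAlgebra F G :=
  MonoidAlgebra.ofCoeff (Finsupp.zipWith (· * ·) (mul_zero 0) x.coeff y.coeff)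

/-- `x ↦ x^{(-1)}`, sending `∑ a_g g` to `∑ a_g g⁻¹`. -/
def invol {F : Type*} [Field F] {G : Type*} [Group G] (x : MonoidAlgebra F G) :
    MonoidAlgebra F G :=
  MonoidAlgebra.ofCoeff (Finsupp.mapDomain (fun g => g⁻¹) x.coeff)

/-- The simple quantity `C̄ = ∑_{g ∈ C} g` of a subset `C ⊆ G`. -/
def sqty (F : Type*) [Field F] {G : Type*} [Group G] [Fintype G] (C : Set G) :
    MonoidAlgebra F G :=
  ∑ g ∈ Finset.univ.filter (· ∈ C), MonoidAlgebra.ofCoeff (Finsupp.single g (1 : F))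

/-- A Schur ring over `G`: a subalgebra of `F[G]` closed under the Hadamard product
and under `x ↦ x^{(-1)}`, containing `1` and `Ḡ`. -/
def IsSRing {F : Type*} [Field F] {G : Type*} [Group G] [Fintype G]
    (A : Subalgebra F (MonoidAlgebra F G)) : Prop :=
  (∀ x ∈ A, ∀ y ∈ A, had x y ∈ A) ∧ (∀ x ∈ A, invol x ∈ A) ∧
    (1 : MonoidAlgebra F G) ∈ A ∧ sqty F (Set.univ : Set G) ∈ A

/-- A rational S-ring: every element is fixed by the `F`-linear extension of every
group automorphism of `G`. -/
def IsRational {F : Type*} [Field F] {G : Type*} [Group G]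
    (A : Subalgebra F (MonoidAlgebra F G)) : Prop :=
  ∀ φ : MulAut G, ∀ x ∈ A, MonoidAlgebra.ofCoeff (Finsupp.mapDomain (⇑φ) x.coeff) = x

/-- An algebra isomorphism between S-rings respects the Hadamard product. -/
def RespHad {F : Type*} [Field F] {G₁ G₂ : Type*} [Group G₁] [Group G₂]
    {A₁ : Subalgebra F (MonoidAlgebra F G₁)} {A₂ : Subalgebra F (MonoidAlgebra F G₂)}
    (φ : A₁ ≃ₐ[F] A₂) : Prop :=
  ∀ (x y : A₁) (h : had (x : MonoidAlgebra F G₁) (y : MonoidAlgebra F G₁) ∈ A₁),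
    ((φ ⟨had (x : MonoidAlgebra F G₁) (y : MonoidAlgebra F G₁), h⟩ : A₂) : MonoidAlgebra F G₂) =
      had ((φ x : A₂) : MonoidAlgebra F G₂) ((φ y : A₂) : MonoidAlgebra F G₂)

/-- The data of a Schur partition exhibiting `A` as an S-ring over `G`: disjoint nonempty
basic sets `T_1, …, T_k` whose simple quantities (the basic quantities) form an `F`-basis
of `A`, with some `T_i = {1}`, the `T_i` covering `G`, and each `T_i^{(-1)}` equal to
some `T_j`. -/
structure SPartition (F : Type*) [Field F] (G : Type*) [Group G] [Fintype G]
    (A : Subalgebra F (MonoidAlgebra F G)) where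
  k : ℕ
  T : Fin k → Set G
  nonempty : ∀ i, (T i).Nonempty
  disjoint : ∀ i j, i ≠ j → Disjoint (T i) (T j)
  indep : LinearIndependent F fun i => sqty F (T i)
  span : (A : Set (MonoidAlgebra F G)) =
    (Submodule.span F (Set.range fun i => sqty F (T i)) : Set (MonoidAlgebra F G))
  one : ∃ i, T i = ({1} : Set G)
  cover : (⋃ i, T i) = (Set.univ : Set G)
  inv : ∀ i, ∃ j, (fun g => g⁻¹) '' T i = T j




lemma SPartition.sqty_mem {F : Type*} [Field F] {G : Type*} [Group G] [Fintype G]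
    {A : Subalgebra F (MonoidAlgebra F G)} (P : SPartition F G A) (i : Fin P.k) :
    sqty F (P.T i) ∈ A := by
  have h : sqty F (P.T i) ∈
      (Submodule.span F (Set.range fun i => sqty F (P.T i)) : Set (MonoidAlgebra F G)) :=
    Submodule.subset_span ⟨i, rfl⟩
  rw [← P.span] at h
  exact h


section HadamardAux

set_option linter.unusedSectionVars false

variable {F : Type*} [Field F] {G : Type*} [Group G] [Fintype G]

lemma had_apply' (x y : MonoidAlgebra F G) (g : G) : (had x y).coeff g = x.coeff g * y.coeff g := by
  rw [had, MonoidAlgebra.coeff_ofCoeff, Finsupp.zipWith_apply]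

lemma sqty_apply' (C : Set G) (g : G) : (sqty F C).coeff g = if g ∈ C then 1 else 0 := by
  rw [sqty, MonoidAlgebra.coeff_sum, Finsupp.finset_sum_apply]
  simp [Finsupp.single_apply]

lemma sum_smul_sqty_apply' {k : ℕ} (T : Fin k → Set G) (c : Fin k → F) (g : G) :
    (∑ i, c i • sqty F (T i)).coeff g = ∑ i, c i * (if g ∈ T i then 1 else 0) := by
  rw [MonoidAlgebra.coeff_sum, Finsupp.finset_sum_apply]
  refine Finset.sum_congr rfl fun i _ => ?_
  rw [MonoidAlgebra.coeff_smul, Finsupp.smul_apply, sqty_apply', smul_eq_mul]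

lemma had_sum' {k : ℕ} {T : Fin k → Set G}
    (hdis : ∀ i j, i ≠ j → Disjoint (T i) (T j)) (c d : Fin k → F) :
    had (∑ i, c i • sqty F (T i)) (∑ i, d i • sqty F (T i)) =
      ∑ i, (c i * d i) • sqty F (T i) := by
  ext g
  rw [had_apply', sum_smul_sqty_apply', sum_smul_sqty_apply', sum_smul_sqty_apply']
  by_cases h : ∃ i, g ∈ T i
  · obtain ⟨i₀, hi₀⟩ := h
    have key : ∀ (e : Fin k → F), (∑ i, e i * (if g ∈ T i then 1 else 0)) = e i₀ := by
      intro e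
      rw [Finset.sum_eq_single i₀]
      · simp [hi₀]
      · intro i _ hne
        have : g ∉ T i := fun hg => (hdis i i₀ hne).ne_of_mem hg hi₀ rfl
        simp [this]
      · simp
    rw [key, key, key]
  · push_neg at h
    simp [h]

lemma sqty_ne_zero' {C : Set G} (hC : C.Nonempty) : sqty F C ≠ 0 := by
  obtain ⟨g, hg⟩ := hC
  intro h
  have := congrArg (fun x : MonoidAlgebra F G => x.coeff g) h
  simp [sqty_apply', hg] at this

lemma sqty_eq_sum_ite' {k : ℕ} (T : Fin k → Set G) (i : Fin k) :
    sqty F (T i) = ∑ l, (if l = i then (1:F) else 0) • sqty F (T l) := by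
  simp [Finset.sum_ite_eq', ite_smul]

variable {A : Subalgebra F (MonoidAlgebra F G)} (P : SPartition F G A)

lemma SPartition.repr {x : MonoidAlgebra F G} (hx : x ∈ A) :
    ∃ c : Fin P.k → F, x = ∑ i, c i • sqty F (P.T i) := by
  have hx' : x ∈ (A : Set (MonoidAlgebra F G)) := hx
  rw [P.span] at hx'
  obtain ⟨c, hc⟩ := (Submodule.mem_span_range_iff_exists_fun F).1 hx'
  exact ⟨c, hc.symm⟩

lemma SPartition.coeff_eq {c d : Fin P.k → F}
    (h : ∑ i, c i • sqty F (P.T i) = ∑ i, d i • sqty F (P.T i)) : ∀ i, c i = d i := by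
  have h0 : ∑ i, (c i - d i) • sqty F (P.T i) = 0 := by
    simp only [sub_smul, Finset.sum_sub_distrib, h, sub_self]
  intro i
  have := Fintype.linearIndependent_iff.1 P.indep (fun i => c i - d i) h0 i
  exact sub_eq_zero.mp this

lemma SPartition.sum_mem (c : Fin P.k → F) : ∑ i, c i • sqty F (P.T i) ∈ A :=
  Submodule.sum_mem _ fun i _ => (A.toSubmodule).smul_mem _ (P.sqty_mem i)

end HadamardAux

set_option synthInstance.maxHeartbeats 1000000
set_option maxHeartbeats 1000000

/-- An `F`-algebra isomorphism between S-rings maps basic quantities to basic quantities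
if and only if it respects the Hadamard product. -/
theorem sring_iso_iff_respects_hadamard {F : Type*} [Field F]
    {G₁ : Type*} [Group G₁] [Fintype G₁] {G₂ : Type*} [Group G₂] [Fintype G₂]
    {A₁ : Subalgebra F (MonoidAlgebra F G₁)} {A₂ : Subalgebra F (MonoidAlgebra F G₂)}
    (P₁ : SPartition F G₁ A₁) (P₂ : SPartition F G₂ A₂) (φ : A₁ ≃ₐ[F] A₂) :
    (∀ i, ∃ j,
        ((φ ⟨sqty F (P₁.T i), P₁.sqty_mem i⟩ : A₂) : MonoidAlgebra F G₂) = sqty F (P₂.T j))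
      ↔ RespHad φ := by
  constructor
  · -- basic → respects Hadamard
    intro hb
    choose σ hσ using hb
    have hinj : Function.Injective σ := by
      intro a b hab
      have h1 : ((φ ⟨sqty F (P₁.T a), P₁.sqty_mem a⟩ : A₂) : MonoidAlgebra F G₂)
          = ((φ ⟨sqty F (P₁.T b), P₁.sqty_mem b⟩ : A₂) : MonoidAlgebra F G₂) := by
        rw [hσ, hσ, hab]
      have h2 := φ.injective (Subtype.ext h1)
      have h3 : sqty F (P₁.T a) = sqty F (P₁.T b) := congrArg Subtype.val h2
      exact P₁.indep.injective h3
    have hdis2 : ∀ l m : Fin P₁.k, l ≠ m → Disjoint (P₂.T (σ l)) (P₂.T (σ m)) :=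
      fun l m hlm => P₂.disjoint _ _ (fun e => hlm (hinj e))
    intro x y h
    obtain ⟨c, hc⟩ := P₁.repr x.2
    obtain ⟨d, hd⟩ := P₁.repr y.2
    have hxs : x = ∑ l, c l • (⟨sqty F (P₁.T l), P₁.sqty_mem l⟩ : A₁) := by
      apply Subtype.ext
      rw [hc]; push_cast; rfl
    have hys : y = ∑ l, d l • (⟨sqty F (P₁.T l), P₁.sqty_mem l⟩ : A₁) := by
      apply Subtype.ext
      rw [hd]; push_cast; rfl
    have hhad : had (x : MonoidAlgebra F G₁) (y : MonoidAlgebra F G₁)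
        = ∑ l, (c l * d l) • sqty F (P₁.T l) := by
      rw [hc, hd, had_sum' P₁.disjoint]
    have hsub : (⟨had (x : MonoidAlgebra F G₁) (y : MonoidAlgebra F G₁), h⟩ : A₁)
        = ∑ l, (c l * d l) • (⟨sqty F (P₁.T l), P₁.sqty_mem l⟩ : A₁) := by
      apply Subtype.ext
      show had (x : MonoidAlgebra F G₁) (y : MonoidAlgebra F G₁) = _
      rw [hhad]; push_cast; rfl
    have hφbase : ∀ (e : Fin P₁.k → F),
        ((φ (∑ l, e l • (⟨sqty F (P₁.T l), P₁.sqty_mem l⟩ : A₁)) : A₂) : MonoidAlgebra F G₂)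
          = ∑ l, e l • sqty F (P₂.T (σ l)) := by
      intro e
      rw [map_sum]
      push_cast
      refine Finset.sum_congr rfl fun l _ => ?_
      rw [map_smul]
      push_cast
      rw [hσ]
    have hφx : ((φ x : A₂) : MonoidAlgebra F G₂) = ∑ l, c l • sqty F (P₂.T (σ l)) := by
      rw [hxs]; exact hφbase c
    have hφy : ((φ y : A₂) : MonoidAlgebra F G₂) = ∑ l, d l • sqty F (P₂.T (σ l)) := by
      rw [hys]; exact hφbase d
    rw [hφx, hφy, had_sum' hdis2, hsub]
    exact hφbase _
  · -- respects Hadamard → basic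
    intro hR i
    set x : A₁ := ⟨sqty F (P₁.T i), P₁.sqty_mem i⟩ with hxdef
    obtain ⟨c, hc⟩ := P₂.repr (φ x).2
    have hxne : (x : MonoidAlgebra F G₁) ≠ 0 := sqty_ne_zero' (P₁.nonempty i)
    have hφxne : ((φ x : A₂) : MonoidAlgebra F G₂) ≠ 0 := by
      intro h0
      have h1 : φ x = 0 := Subtype.ext h0
      have h2 : x = 0 := φ.injective (h1.trans (map_zero φ).symm)
      exact hxne (by rw [h2]; rfl)
    have hex : ∃ j, c j ≠ 0 := by
      by_contra hno
      push_neg at hno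
      apply hφxne
      rw [hc]
      simp [hno]
    obtain ⟨j, hcj⟩ := hex
    refine ⟨j, ?_⟩
    set u : A₂ := ⟨sqty F (P₂.T j), P₂.sqty_mem j⟩ with hudef
    set w : A₁ := φ.symm u with hwdef
    obtain ⟨d, hd⟩ := P₁.repr w.2
    have hxsum : (x : MonoidAlgebra F G₁)
        = ∑ l, (if l = i then (1:F) else 0) • sqty F (P₁.T l) := sqty_eq_sum_ite' _ _
    have hhadwx : had (w : MonoidAlgebra F G₁) (x : MonoidAlgebra F G₁)
        = ∑ l, (d l * (if l = i then 1 else 0)) • sqty F (P₁.T l) := by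
      rw [hd, hxsum, had_sum' P₁.disjoint]
    have hmem : had (w : MonoidAlgebra F G₁) (x : MonoidAlgebra F G₁) ∈ A₁ := by
      rw [hhadwx]; exact P₁.sum_mem _
    have key := hR w x hmem
    have hφw : φ w = u := φ.apply_symm_apply u
    have husum : (u : MonoidAlgebra F G₂)
        = ∑ l, (if l = j then (1:F) else 0) • sqty F (P₂.T l) := sqty_eq_sum_ite' _ _
    have hhadu : had (u : MonoidAlgebra F G₂) ((φ x : A₂) : MonoidAlgebra F G₂)
        = ∑ l, ((if l = j then (1:F) else 0) * c l) • sqty F (P₂.T l) := by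
      rw [husum, hc, had_sum' P₂.disjoint]
    have hsingle : ∑ l, ((if l = j then (1:F) else 0) * c l) • sqty F (P₂.T l)
        = c j • sqty F (P₂.T j) := by
      rw [Finset.sum_eq_single j]
      · simp
      · intro l _ hlj; simp [hlj]
      · simp
    have key2 : ((φ ⟨had (w : MonoidAlgebra F G₁) (x : MonoidAlgebra F G₁), hmem⟩ : A₂)
        : MonoidAlgebra F G₂) = ((c j • u : A₂) : MonoidAlgebra F G₂) := by
      rw [key, hφw, hhadu, hsingle]
      push_cast
      rfl
    have key3 : (⟨had (w : MonoidAlgebra F G₁) (x : MonoidAlgebra F G₁), hmem⟩ : A₁)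
        = c j • w := by
      have h5 : φ ⟨had (w : MonoidAlgebra F G₁) (x : MonoidAlgebra F G₁), hmem⟩ = c j • u :=
        Subtype.ext key2
      calc (⟨had (w : MonoidAlgebra F G₁) (x : MonoidAlgebra F G₁), hmem⟩ : A₁)
          = φ.symm (φ ⟨had (w : MonoidAlgebra F G₁) (x : MonoidAlgebra F G₁), hmem⟩) :=
            (φ.symm_apply_apply _).symm
        _ = φ.symm (c j • u) := by rw [h5]
        _ = c j • w := by rw [map_smul, hwdef]
    have key4 : had (w : MonoidAlgebra F G₁) (x : MonoidAlgebra F G₁)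
        = c j • (w : MonoidAlgebra F G₁) := by
      have h6 := congrArg Subtype.val key3
      simpa using h6
    have hdcoef : ∀ l, d l * (if l = i then 1 else 0) = c j * d l := by
      apply P₁.coeff_eq
      rw [← hhadwx, key4, hd, Finset.smul_sum]
      refine Finset.sum_congr rfl fun l _ => ?_
      rw [smul_smul]
    have hdzero : ∀ l, l ≠ i → d l = 0 := by
      intro l hl
      have h7 := hdcoef l
      rw [if_neg hl, mul_zero] at h7
      exact (mul_eq_zero.mp h7.symm).resolve_left hcj
    have hwne : (w : MonoidAlgebra F G₁) ≠ 0 := by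
      intro h0
      have h1 : w = 0 := Subtype.ext h0
      have h2 : u = 0 := by rw [← hφw, h1, map_zero]
      exact sqty_ne_zero' (P₂.nonempty j) (congrArg Subtype.val h2)
    have hdi : d i ≠ 0 := by
      intro h0
      apply hwne
      rw [hd]
      refine Finset.sum_eq_zero fun l _ => ?_
      by_cases hl : l = i
      · rw [hl, h0, zero_smul]
      · rw [hdzero l hl, zero_smul]
    have hcj1 : c j = 1 := by
      have h6 := hdcoef i
      rw [if_pos rfl, mul_one] at h6
      exact mul_right_cancel₀ hdi (h6.symm.trans (one_mul (d i)).symm)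
    have hwsub : w = d i • x := by
      apply Subtype.ext
      have hwx : (w : MonoidAlgebra F G₁) = d i • (x : MonoidAlgebra F G₁) := by
        rw [hd, hxsum, Finset.smul_sum]
        refine Finset.sum_congr rfl fun l _ => ?_
        by_cases hl : l = i
        · subst hl; rw [if_pos rfl, smul_smul, mul_one]
        · simp [hdzero l hl, hl]
      rw [hwx]; push_cast; rfl
    have hueq : (u : MonoidAlgebra F G₂) = d i • ((φ x : A₂) : MonoidAlgebra F G₂) := by
      have h7 : u = d i • φ x := by rw [← hφw, hwsub, map_smul]
      rw [h7]; push_cast; rfl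
    have hite : ∀ l, (if l = j then (1:F) else 0) = d i * c l := by
      apply P₂.coeff_eq
      rw [← husum, hueq, hc, Finset.smul_sum]
      refine Finset.sum_congr rfl fun l _ => ?_
      rw [smul_smul]
    have hdi1 : d i = 1 := by
      have h8 := hite j
      rw [if_pos rfl, hcj1, mul_one] at h8
      exact h8.symm
    have hux : u = φ x := by rw [← hφw, hwsub, hdi1, one_smul]
    rw [← hux]
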